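/- Let G be a simple graph on a finite vertex type V, let C ⊆ V, and let k, t ∈ ℕ. Let m : V → ℕ be defined by m v = 1 if v ∈ C and m v = k + 1 if v ∉ C, and let G' = G⟨m⟩ be the fiber-clique blow-up. Then there exists a set B ⊆ C with |B| ≤ k such that every dominating set of G of size at most t intersects B, if and only if there exists a set B' of vertices of G' with |B'| ≤ k such that every dominating set of G' of size at most t intersects B'. -/

import Mathlib

/-- The fiber-clique blow-up `G⟨m⟩` of a simple graph `G` along `m : V → ℕ`: the vertex type is
`Σ v : V, Fin (m v)`, and two distinct vertices `⟨u, i⟩` and `⟨v, j⟩` are adjacent iff `u = v`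
or `u` and `v` are adjacent in `G`. -/
def SimpleGraph.fiberCliqueBlowup {V : Type*} (G : SimpleGraph V) (m : V → ℕ) :
    SimpleGraph (Σ v : V, Fin (m v)) where
  Adj a b := a ≠ b ∧ (a.1 = b.1 ∨ G.Adj a.1 b.1)
  symm := by
    constructor
    rintro a b ⟨hne, h⟩
    exact ⟨hne.symm, by cases h with
      | inl h => exact Or.inl h.symm
      | inr h => exact Or.inr (G.adj_symm h)⟩
  loopless := by constructor; rintro a ⟨hne, -⟩; exact hne rfl

/-- A set `D` of vertices of a graph `H` is a dominating set if every vertex `w` satisfies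
`w ∈ D` or `w` is adjacent to some vertex of `D`. -/
def SimpleGraph.IsDominatingSet {W : Type*} (H : SimpleGraph W) (D : Set W) : Prop :=
  ∀ w : W, w ∈ D ∨ ∃ d ∈ D, H.Adj w d

open Classical in
theorem dominatingSet_interdiction_fiberCliqueBlowup {V : Type*} [Fintype V]
    (G : SimpleGraph V) (C : Set V) (k t : ℕ) (m : V → ℕ)
    (hm : ∀ v : V, m v = if v ∈ C then 1 else k + 1) :
    (∃ B : Set V, B ⊆ C ∧ B.ncard ≤ k ∧
        ∀ D : Set V, G.IsDominatingSet D → D.ncard ≤ t → (D ∩ B).Nonempty) ↔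
      (∃ B' : Set (Σ v : V, Fin (m v)), B'.ncard ≤ k ∧
        ∀ D' : Set (Σ v : V, Fin (m v)),
          (G.fiberCliqueBlowup m).IsDominatingSet D' → D'.ncard ≤ t → (D' ∩ B').Nonempty) := by
  have hm1 : ∀ v, 0 < m v := by intro v; rw [hm]; split <;> omega
  let i0 : ∀ v, Fin (m v) := fun v => ⟨0, hm1 v⟩
  constructor
  · rintro ⟨B, hBC, hBk, hB⟩
    refine ⟨{a | a.1 ∈ B}, ?_, ?_⟩
    · have hinj : Set.InjOn (Sigma.fst) {a : Σ v, Fin (m v) | a.1 ∈ B} := by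
        rintro ⟨u, i⟩ hu ⟨v, j⟩ hv (h : u = v)
        subst h
        have hmu : m u = 1 := by rw [hm, if_pos (hBC hu)]
        have hi := i.isLt
        have hj := j.isLt
        have : i = j := Fin.ext (by omega)
        rw [this]
      calc ({a : Σ v, Fin (m v) | a.1 ∈ B}).ncard ≤ B.ncard :=
            Set.ncard_le_ncard_of_injOn Sigma.fst (fun a ha => ha) hinj (Set.toFinite _)
        _ ≤ k := hBk
    · intro D' hD' hDt
      have hdom : G.IsDominatingSet (Sigma.fst '' D') := by
        intro w
        rcases hD' ⟨w, i0 w⟩ with h | ⟨d, hd, hadj⟩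
        · exact Or.inl ⟨_, h, rfl⟩
        · rcases hadj.2 with heq | hadj'
          · exact Or.inl ⟨d, hd, heq.symm⟩
          · exact Or.inr ⟨d.1, ⟨d, hd, rfl⟩, hadj'⟩
      have hcard : (Sigma.fst '' D').ncard ≤ t :=
        le_trans (Set.ncard_image_le (Set.toFinite _)) hDt
      obtain ⟨v, hvD, hvB⟩ := hB _ hdom hcard
      obtain ⟨a, haD', ha⟩ := hvD
      exact ⟨a, haD', by simp only [Set.mem_setOf_eq, ha]; exact hvB⟩
  · rintro ⟨B', hBk, hB⟩
    have hpick : ∀ v, v ∉ C → ∃ i : Fin (m v), (⟨v, i⟩ : Σ v, Fin (m v)) ∉ B' := by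
      intro v hv
      by_contra h
      push_neg at h
      have hinj : Set.InjOn (fun i : Fin (m v) => (⟨v, i⟩ : Σ v, Fin (m v)))
          (Set.univ : Set (Fin (m v))) := by
        intro i _ j _ hij
        exact eq_of_heq (Sigma.mk.inj_iff.mp hij).2
      have hle := Set.ncard_le_ncard_of_injOn _ (fun i _ => h i) hinj (Set.toFinite _)
      rw [Set.ncard_univ, Nat.card_eq_fintype_card, Fintype.card_fin, hm, if_neg hv] at hle
      omega
    let pick : ∀ v, Fin (m v) := fun v =>
      if h : ∃ i : Fin (m v), (⟨v, i⟩ : Σ v, Fin (m v)) ∉ B' then h.choose else i0 v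
    have hpick' : ∀ v, v ∉ C → (⟨v, pick v⟩ : Σ v, Fin (m v)) ∉ B' := by
      intro v hv
      have h := hpick v hv
      simp only [pick, dif_pos h]
      exact h.choose_spec
    refine ⟨{v | v ∈ C ∧ (⟨v, pick v⟩ : Σ v, Fin (m v)) ∈ B'}, fun v hv => hv.1, ?_, ?_⟩
    · have hinj : Set.InjOn (fun v => (⟨v, pick v⟩ : Σ v, Fin (m v)))
          {v | v ∈ C ∧ (⟨v, pick v⟩ : Σ v, Fin (m v)) ∈ B'} := by
        intro u _ v _ h
        exact congrArg Sigma.fst h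
      calc ({v | v ∈ C ∧ (⟨v, pick v⟩ : Σ v, Fin (m v)) ∈ B'}).ncard ≤ B'.ncard :=
            Set.ncard_le_ncard_of_injOn _ (fun v hv => hv.2) hinj (Set.toFinite _)
        _ ≤ k := hBk
    · intro D hdom hDt
      set D' : Set (Σ v : V, Fin (m v)) := (fun v => (⟨v, pick v⟩ : Σ v, Fin (m v))) '' D with hD'
      have hdom' : (G.fiberCliqueBlowup m).IsDominatingSet D' := by
        rintro ⟨w, j⟩
        rcases hdom w with hw | ⟨d, hd, hadj⟩
        · by_cases hj : j = pick w
          · exact Or.inl ⟨w, hw, by rw [hj]⟩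
          · refine Or.inr ⟨⟨w, pick w⟩, ⟨w, hw, rfl⟩, ?_, Or.inl rfl⟩
            intro hcon
            exact hj (eq_of_heq (Sigma.mk.inj_iff.mp hcon).2)
        · refine Or.inr ⟨⟨d, pick d⟩, ⟨d, hd, rfl⟩, ?_, Or.inr hadj⟩
          intro hcon
          exact hadj.ne (congrArg Sigma.fst hcon)
      have hcard : D'.ncard ≤ t := le_trans (Set.ncard_image_le (Set.toFinite _)) hDt
      obtain ⟨a, haD', haB'⟩ := hB D' hdom' hcard
      obtain ⟨v, hvD, rfl⟩ := haD'
      have hvC : v ∈ C := by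
        by_contra h
        exact hpick' v h haB'
      exact ⟨v, hvD, hvC, haB'⟩
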